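/- The Lie algebra g¹_{2m} (m ≥ 4) with basis X₁,...,X₆, Y₁,...,Y_{2m−6} and nonzero brackets [X₁,X_j] = X_{j+1} (2 ≤ j ≤ 5), [X₅,X₂] = [X₃,X₄] = Y₁, [X₃,X₂] = Y₂, [Y₂,X₂] = X₅, [Y₂,X₃] = X₆, [Y_{2t−1}, Y_{2t}] = X₆ (2 ≤ t ≤ m−3) is 2-abelian: its derived subalgebra is not abelian but C²g is abelian. -/
import Mathlib

/-- Bilinear lifting: if brackets of generators land in `P`, so do brackets of spans. -/
lemma lie_span_mem {g : Type*} [LieRing g] [LieAlgebra ℂ g] {s t : Set g}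
    {P : Submodule ℂ g} (h : ∀ a ∈ s, ∀ b ∈ t, ⁅a, b⁆ ∈ P) :
    ∀ x ∈ Submodule.span ℂ s, ∀ y ∈ Submodule.span ℂ t, ⁅x, y⁆ ∈ P := by
  intro x hx y hy
  induction hx using Submodule.span_induction with
  | mem a ha =>
    induction hy using Submodule.span_induction with
    | mem b hb => exact h a ha b hb
    | zero => simp
    | add u v hu hv pu pv => rw [lie_add]; exact P.add_mem pu pv
    | smul c u hu pu => rw [lie_smul]; exact P.smul_mem c pu
  | zero => simp
  | add u v hu hv pu pv => rw [add_lie]; exact P.add_mem pu pv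
  | smul c u hu pu => rw [smul_lie]; exact P.smul_mem c pu

/-- the Lie algebra `g¹_{2m}` (`m ≥ 4`) with basis
`X₁,...,X₆, Y₁,...,Y_{2m-6}` (here `X_l = e l`, `Y_k = e (6+k)`) and nonzero brackets
`[X₁,X_j] = X_{j+1}` (`2 ≤ j ≤ 5`), `[X₅,X₂] = [X₃,X₄] = Y₁`, `[X₃,X₂] = Y₂`,
`[Y₂,X₂] = X₅`, `[Y₂,X₃] = X₆`, `[Y_{2t-1},Y_{2t}] = X₆` (`2 ≤ t ≤ m-3`)
is `2`-abelian: its derived subalgebra is not abelian but `C²g` is abelian. -/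
theorem stmt13 (m : ℕ) (hm : 4 ≤ m) (g : Type*) [LieRing g] [LieAlgebra ℂ g]
    (e : ℕ → g)
    (hindep : LinearIndependent ℂ (fun i : Fin (2 * m) => e (i.1 + 1)))
    (hspan : Submodule.span ℂ (Set.range (fun i : Fin (2 * m) => e (i.1 + 1))) = ⊤)
    (hbr : ∀ j, 2 ≤ j → j ≤ 5 → ⁅e 1, e j⁆ = e (j + 1))
    (hb1 : ⁅e 5, e 2⁆ = e 7)
    (hb2 : ⁅e 3, e 4⁆ = e 7)
    (hb3 : ⁅e 3, e 2⁆ = e 8)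
    (hb4 : ⁅e 8, e 2⁆ = e 5)
    (hb5 : ⁅e 8, e 3⁆ = e 6)
    (hb6 : ∀ t, 2 ≤ t → t ≤ m - 3 → ⁅e (2 * t + 5), e (2 * t + 6)⁆ = e 6)
    (hb0 : ∀ i j, 1 ≤ i → i < j → j ≤ 2 * m →
      ¬(i = 1 ∧ 2 ≤ j ∧ j ≤ 5) →
      ¬(i = 2 ∧ j = 5) → ¬(i = 3 ∧ j = 4) → ¬(i = 2 ∧ j = 3) →
      ¬(i = 2 ∧ j = 8) → ¬(i = 3 ∧ j = 8) →
      ¬(∃ t, 2 ≤ t ∧ t ≤ m - 3 ∧ i = 2 * t + 5 ∧ j = 2 * t + 6) →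
      ⁅e i, e j⁆ = 0) :
    ⁅LieModule.lowerCentralSeries ℂ g g 1, LieModule.lowerCentralSeries ℂ g g 1⁆ ≠
        (⊥ : LieIdeal ℂ g) ∧
    ⁅LieModule.lowerCentralSeries ℂ g g 2, LieModule.lowerCentralSeries ℂ g g 2⁆ =
        (⊥ : LieIdeal ℂ g) := by
  set S1 : Submodule ℂ g :=
    Submodule.span ℂ {e 3, e 4, e 5, e 6, e 7, e 8} with hS1
  set S2 : Submodule ℂ g :=
    Submodule.span ℂ {e 4, e 5, e 6, e 7, e 8} with hS2
  -- basic nonvanishing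
  have hne : ∀ k : ℕ, 1 ≤ k → k ≤ 2 * m → e k ≠ 0 := by
    intro k hk1 hk2
    have := hindep.ne_zero ⟨k - 1, by omega⟩
    simpa [Nat.sub_add_cancel hk1] using this
  -- brackets land in S1 (for ordered indices), and in S2 unless (i,j)=(1,2)
  have brS2 : ∀ i j : ℕ, 1 ≤ i → i < j → j ≤ 2 * m → ¬(i = 1 ∧ j = 2) →
      ⁅e i, e j⁆ ∈ S2 := by
    intro i j hi hij hj h12
    by_cases c1 : i = 1 ∧ 2 ≤ j ∧ j ≤ 5
    · obtain ⟨rfl, hj2, hj5⟩ := c1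
      rw [hbr j hj2 hj5]
      have hj3 : 3 ≤ j := by omega
      interval_cases j <;> exact Submodule.subset_span (by simp)
    by_cases c2 : i = 2 ∧ j = 5
    · obtain ⟨rfl, rfl⟩ := c2
      rw [← lie_skew, hb1]
      exact S2.neg_mem (Submodule.subset_span (by simp))
    by_cases c3 : i = 3 ∧ j = 4
    · obtain ⟨rfl, rfl⟩ := c3
      rw [hb2]; exact Submodule.subset_span (by simp)
    by_cases c4 : i = 2 ∧ j = 3
    · obtain ⟨rfl, rfl⟩ := c4
      rw [← lie_skew, hb3]
      exact S2.neg_mem (Submodule.subset_span (by simp))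
    by_cases c5 : i = 2 ∧ j = 8
    · obtain ⟨rfl, rfl⟩ := c5
      rw [← lie_skew, hb4]
      exact S2.neg_mem (Submodule.subset_span (by simp))
    by_cases c6 : i = 3 ∧ j = 8
    · obtain ⟨rfl, rfl⟩ := c6
      rw [← lie_skew, hb5]
      exact S2.neg_mem (Submodule.subset_span (by simp))
    by_cases c7 : ∃ t, 2 ≤ t ∧ t ≤ m - 3 ∧ i = 2 * t + 5 ∧ j = 2 * t + 6
    · obtain ⟨t, ht2, ht3, rfl, rfl⟩ := c7
      rw [hb6 t ht2 ht3]; exact Submodule.subset_span (by simp)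
    rw [hb0 i j hi hij hj c1 c2 c3 c4 c5 c6 c7]
    exact S2.zero_mem
  have brS1 : ∀ i j : ℕ, 1 ≤ i → i < j → j ≤ 2 * m → ⁅e i, e j⁆ ∈ S1 := by
    intro i j hi hij hj
    by_cases h12 : i = 1 ∧ j = 2
    · obtain ⟨rfl, rfl⟩ := h12
      rw [hbr 2 le_rfl (by norm_num)]
      exact Submodule.subset_span (by simp)
    · have hsub : S2 ≤ S1 := Submodule.span_le.2 fun x hx =>
        Submodule.subset_span (by simp only [Set.mem_insert_iff,
          Set.mem_singleton_iff] at hx ⊢; tauto)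
      exact hsub (brS2 i j hi hij hj h12)
  -- symmetric versions
  have brS1sym : ∀ i j : ℕ, 1 ≤ i → i ≤ 2 * m → 1 ≤ j → j ≤ 2 * m →
      ⁅e i, e j⁆ ∈ S1 := by
    intro i j hi him hj hjm
    rcases lt_trichotomy i j with h | h | h
    · exact brS1 i j hi h hjm
    · simp [h]
    · rw [← lie_skew]
      exact S1.neg_mem (brS1 j i hj h him)
  have brS2sym : ∀ i j : ℕ, 1 ≤ i → i ≤ 2 * m → 1 ≤ j → j ≤ 2 * m →
      (3 ≤ i ∨ 3 ≤ j) → ⁅e i, e j⁆ ∈ S2 := by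
    intro i j hi him hj hjm h3
    rcases lt_trichotomy i j with h | h | h
    · exact brS2 i j hi h hjm (by omega)
    · simp [h]
    · rw [← lie_skew]
      exact S2.neg_mem (brS2 j i hj h him (by omega))
  -- brackets among S2 generators vanish
  have brzero : ∀ i j : ℕ, 4 ≤ i → i ≤ 8 → 4 ≤ j → j ≤ 8 → ⁅e i, e j⁆ = 0 := by
    have key : ∀ i j : ℕ, 4 ≤ i → i < j → j ≤ 8 → ⁅e i, e j⁆ = 0 := by
      intro i j hi hij hj
      refine hb0 i j (by omega) hij (by omega) (by omega) (by omega) (by omega)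
        (by omega) (by omega) (by omega) ?_
      rintro ⟨t, ht2, _, rfl, -⟩; omega
    intro i j hi hi8 hj hj8
    rcases lt_trichotomy i j with h | h | h
    · exact key i j hi h hj8
    · simp [h]
    · rw [← lie_skew, key j i hj h hi8, neg_zero]
  -- the base set
  set B : Set g := Set.range (fun i : Fin (2 * m) => e (i.1 + 1)) with hB
  have hBmem : ∀ a ∈ B, ∃ k : ℕ, 1 ≤ k ∧ k ≤ 2 * m ∧ a = e k := by
    rintro a ⟨i, rfl⟩
    exact ⟨i.1 + 1, by omega, by omega, rfl⟩
  -- C¹ ⊆ S1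
  have hC1 : ∀ x ∈ LieModule.lowerCentralSeries ℂ g g 1, x ∈ S1 := by
    intro z hz
    rw [show (1 : ℕ) = 0 + 1 from rfl, LieModule.lowerCentralSeries_succ,
      LieModule.lowerCentralSeries_zero, ← LieSubmodule.mem_toSubmodule,
      LieSubmodule.lieIdeal_oper_eq_linear_span'] at hz
    refine Submodule.span_le.2 ?_ hz
    rintro _ ⟨x, -, n, -, rfl⟩
    have hx : x ∈ Submodule.span ℂ B := by rw [hspan]; trivial
    have hn : n ∈ Submodule.span ℂ B := by rw [hspan]; trivial
    refine lie_span_mem ?_ x hx n hn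
    intro a ha b hb
    obtain ⟨i, hi1, hi2, rfl⟩ := hBmem a ha
    obtain ⟨j, hj1, hj2, rfl⟩ := hBmem b hb
    exact brS1sym i j hi1 hi2 hj1 hj2
  -- C² ⊆ S2
  have hC2 : ∀ x ∈ LieModule.lowerCentralSeries ℂ g g 2, x ∈ S2 := by
    intro z hz
    rw [show (2 : ℕ) = 1 + 1 from rfl, LieModule.lowerCentralSeries_succ,
      ← LieSubmodule.mem_toSubmodule,
      LieSubmodule.lieIdeal_oper_eq_linear_span'] at hz
    refine Submodule.span_le.2 ?_ hz
    rintro _ ⟨x, -, n, hn, rfl⟩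
    have hx : x ∈ Submodule.span ℂ B := by rw [hspan]; trivial
    have hn' : n ∈ S1 := hC1 n hn
    refine lie_span_mem ?_ x hx n hn'
    intro a ha b hb
    obtain ⟨i, hi1, hi2, rfl⟩ := hBmem a ha
    simp only [Set.mem_insert_iff, Set.mem_singleton_iff] at hb
    have h8 : (8 : ℕ) ≤ 2 * m := by omega
    rcases hb with rfl | rfl | rfl | rfl | rfl | rfl <;>
      exact brS2sym i _ hi1 hi2 (by omega) (by omega) (by omega)
  constructor
  · -- C¹ is not abelian: ⁅e 3, e 4⁆ = e 7 ≠ 0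
    intro habs
    have he3 : e 3 ∈ LieModule.lowerCentralSeries ℂ g g 1 := by
      rw [show (1 : ℕ) = 0 + 1 from rfl, LieModule.lowerCentralSeries_succ,
        LieModule.lowerCentralSeries_zero]
      rw [← hbr 2 le_rfl (by norm_num)]
      exact LieSubmodule.lie_mem_lie (LieSubmodule.mem_top _) (LieSubmodule.mem_top _)
    have he4 : e 4 ∈ LieModule.lowerCentralSeries ℂ g g 1 := by
      rw [show (1 : ℕ) = 0 + 1 from rfl, LieModule.lowerCentralSeries_succ,
        LieModule.lowerCentralSeries_zero]
      rw [show (4 : ℕ) = 3 + 1 from rfl, ← hbr 3 (by norm_num) (by norm_num)]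
      exact LieSubmodule.lie_mem_lie (LieSubmodule.mem_top _) (LieSubmodule.mem_top _)
    have h7 : e 7 ∈ (⊥ : LieIdeal ℂ g) := by
      rw [← habs, ← hb2]
      exact LieSubmodule.lie_mem_lie he3 he4
    rw [LieSubmodule.mem_bot] at h7
    exact hne 7 (by norm_num) (by omega) h7
  · -- ⁅C², C²⁆ = ⊥
    rw [eq_bot_iff]
    intro z hz
    rw [← LieSubmodule.mem_toSubmodule,
      LieSubmodule.lieIdeal_oper_eq_linear_span'] at hz
    rw [LieSubmodule.mem_bot]
    have hz' : z ∈ (⊥ : Submodule ℂ g) := by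
      refine Submodule.span_le.2 ?_ hz
      rintro _ ⟨x, hx, n, hn, rfl⟩
      have hx' : x ∈ S2 := hC2 x hx
      have hn' : n ∈ S2 := hC2 n hn
      refine lie_span_mem ?_ x hx' n hn'
      intro a ha b hb
      simp only [Set.mem_insert_iff, Set.mem_singleton_iff] at ha hb
      rw [Submodule.mem_bot]
      rcases ha with rfl | rfl | rfl | rfl | rfl <;>
        rcases hb with rfl | rfl | rfl | rfl | rfl <;>
        exact brzero _ _ (by norm_num) (by norm_num) (by norm_num) (by norm_num)
    simpa using hz'
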